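/- Let α, β : ℤ × ℤ → ℂ be double sequences with β antisymmetric (β(n,k) = −β(k,n)), α(n,n) ≠ 0 for all n, and β(n,k) ≠ 0 whenever n ≠ k. Suppose the matrices F and G with entries F(n,k) = (∏_{i=k}^{n−1} α(i,k)) / (∏_{i=k+1}^{n} β(i,k)) and G(n,k) = (α(k,k)/α(n,n)) · (∏_{i=k+1}^{n} α(i,n)) / (∏_{i=k}^{n−1} β(i,n)) (for k ≤ n) form a matrix inversion. Then for all integers n > k: ∑_{i=k}^{n} f(k,n;i) = 0, where f(k,n;i) = (−1)^{n−i} · [ ∏_{(j₁,j₂): k ≤ j₁ < j₂ ≤ n, j₁ ≠ i, j₂ ≠ i} β(j₁,j₂) ] · [ ∏_{j=k+1}^{n−1} α(j,i) ]. -/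

import Mathlib

open Finset

/-- `f(k,n;i) = (-1)^{n-i} * ∏_{k ≤ j₁ < j₂ ≤ n, j₁ ≠ i, j₂ ≠ i} β(j₁,j₂)
    * ∏_{j=k+1}^{n-1} α(j,i)`. -/
noncomputable def fAux (α β : ℤ → ℤ → ℂ) (k n i : ℤ) : ℂ :=
  (-1 : ℂ) ^ (n - i) *
    (∏ p ∈ (Finset.Icc k n ×ˢ Finset.Icc k n).filter
        (fun p => p.1 < p.2 ∧ p.1 ≠ i ∧ p.2 ≠ i), β p.1 p.2) *
    ∏ j ∈ Finset.Icc (k + 1) (n - 1), α j i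

/-- Splitting the full product over pairs into the part avoiding `i` and the
pairs containing `i`. -/
lemma pairs_split (β : ℤ → ℤ → ℂ) (k n i : ℤ) (hki : k ≤ i) (hin : i ≤ n) :
    ∏ p ∈ (Finset.Icc k n ×ˢ Finset.Icc k n).filter (fun p => p.1 < p.2), β p.1 p.2
    = (∏ p ∈ (Finset.Icc k n ×ˢ Finset.Icc k n).filter
        (fun p => p.1 < p.2 ∧ p.1 ≠ i ∧ p.2 ≠ i), β p.1 p.2)
      * ((∏ j ∈ Finset.Icc k (i - 1), β j i) * (∏ j ∈ Finset.Icc (i + 1) n, β i j)) := by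
  classical
  have hdisj : Disjoint ((Finset.Icc k (i - 1)).image (fun j => ((j : ℤ), i)))
      ((Finset.Icc (i + 1) n).image (fun j => ((i : ℤ), j))) := by
    rw [Finset.disjoint_left]
    rintro ⟨a, b⟩ h1 h2
    simp only [Finset.mem_image, Finset.mem_Icc, Prod.mk.injEq] at h1 h2
    obtain ⟨j, hj, rfl, rfl⟩ := h1
    obtain ⟨j', hj', h, rfl⟩ := h2
    omega
  have hinj1 : ∀ x ∈ Finset.Icc k (i - 1), ∀ y ∈ Finset.Icc k (i - 1),
      ((x : ℤ), i) = ((y : ℤ), i) → x = y := by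
    intro x _ y _ h; simpa using h
  have hinj2 : ∀ x ∈ Finset.Icc (i + 1) n, ∀ y ∈ Finset.Icc (i + 1) n,
      ((i : ℤ), x) = ((i : ℤ), y) → x = y := by
    intro x _ y _ h; simpa using h
  have hset : ((Finset.Icc k n ×ˢ Finset.Icc k n).filter
      (fun p => p.1 < p.2 ∧ ¬(p.1 ≠ i ∧ p.2 ≠ i)))
      = (Finset.Icc k (i - 1)).image (fun j => ((j : ℤ), i))
        ∪ (Finset.Icc (i + 1) n).image (fun j => ((i : ℤ), j)) := by
    ext p
    rcases p with ⟨a, b⟩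
    simp only [Finset.mem_filter, Finset.mem_product, Finset.mem_union,
      Finset.mem_image, Finset.mem_Icc, Prod.mk.injEq]
    constructor
    · rintro ⟨⟨⟨hak, han⟩, hbk, hbn⟩, hab, h⟩
      rw [not_and_or, not_ne_iff, not_ne_iff] at h
      rcases h with h | h
      · subst h; right; exact ⟨b, ⟨by omega, hbn⟩, rfl, rfl⟩
      · subst h; left; exact ⟨a, ⟨hak, by omega⟩, rfl, rfl⟩
    · rintro (⟨j, ⟨h1, h2⟩, rfl, rfl⟩ | ⟨j, ⟨h1, h2⟩, rfl, rfl⟩) <;>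
        exact ⟨⟨⟨by omega, by omega⟩, by omega, by omega⟩, by omega, by
          rw [not_and_or, not_ne_iff, not_ne_iff]; omega⟩
  rw [← Finset.prod_filter_mul_prod_filter_not
      ((Finset.Icc k n ×ˢ Finset.Icc k n).filter (fun p => p.1 < p.2))
      (fun p => p.1 ≠ i ∧ p.2 ≠ i), Finset.filter_filter, Finset.filter_filter]
  congr 1
  rw [hset, Finset.prod_union hdisj, Finset.prod_image hinj1, Finset.prod_image hinj2]

/-- Combining the two `α`-products in the inversion summand. -/
lemma alpha_split (α : ℤ → ℤ → ℂ) (k n i : ℤ) (hki : k ≤ i) (hin : i ≤ n) (hkn : k < n) :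
    (∏ j ∈ Finset.Icc i (n - 1), α j i) * (∏ j ∈ Finset.Icc (k + 1) i, α j i)
    = α i i * ∏ j ∈ Finset.Icc (k + 1) (n - 1), α j i := by
  rcases eq_or_lt_of_le hin with rfl | hlt
  · have h1 : Finset.Icc (k + 1) i = insert i (Finset.Icc (k + 1) (i - 1)) := by
      ext x; simp only [Finset.mem_Icc, Finset.mem_insert]; omega
    have h2 : Finset.Icc i (i - 1) = ∅ := by simp
    rw [h1, h2, Finset.prod_empty, Finset.prod_insert (by simp), one_mul]
  · have h1 : Finset.Icc i (n - 1) = insert i (Finset.Icc (i + 1) (n - 1)) := by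
      ext x; simp only [Finset.mem_Icc, Finset.mem_insert]; omega
    have h2 : Finset.Icc (k + 1) (n - 1) = Finset.Icc (k + 1) i ∪ Finset.Icc (i + 1) (n - 1) := by
      ext x; simp only [Finset.mem_Icc, Finset.mem_union]; omega
    have hd : Disjoint (Finset.Icc (k + 1) i) (Finset.Icc (i + 1) (n - 1)) := by
      rw [Finset.disjoint_left]; intro x hx hx'
      simp only [Finset.mem_Icc] at hx hx'; omega
    rw [h1, Finset.prod_insert (by simp), h2, Finset.prod_union hd]
    ring

/-- Equation (3.20) of Wang–Ma: if `α, β` (with `β` antisymmetric, `α n n ≠ 0`,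
`β n k ≠ 0` for `n ≠ k`) give rise to an `(α,β)`-matrix inversion, then for
all `n > k`, `∑_{i=k}^{n} f(k,n;i) = 0`. -/
theorem sum_fAux_eq_zero
    (α β : ℤ → ℤ → ℂ)
    (hanti : ∀ n k : ℤ, β n k = -β k n)
    (hα : ∀ n : ℤ, α n n ≠ 0)
    (hβ : ∀ n k : ℤ, n ≠ k → β n k ≠ 0)
    (hinv : ∀ k n : ℤ, k ≤ n →
      (∑ i ∈ Finset.Icc k n,
        ((∏ j ∈ Finset.Icc i (n - 1), α j i) / (∏ j ∈ Finset.Icc (i + 1) n, β j i)) *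
        ((α k k / α i i) *
          (∏ j ∈ Finset.Icc (k + 1) i, α j i) / (∏ j ∈ Finset.Icc k (i - 1), β j i))) =
      if n = k then 1 else 0) :
    ∀ k n : ℤ, k < n → ∑ i ∈ Finset.Icc k n, fAux α β k n i = 0 := by
  intro k n hkn
  set Q : ℂ := ∏ p ∈ (Finset.Icc k n ×ˢ Finset.Icc k n).filter (fun p => p.1 < p.2), β p.1 p.2
    with hQ
  have key : ∀ i ∈ Finset.Icc k n, fAux α β k n i =
      (Q / α k k) *
      (((∏ j ∈ Finset.Icc i (n - 1), α j i) / (∏ j ∈ Finset.Icc (i + 1) n, β j i)) *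
        ((α k k / α i i) *
          (∏ j ∈ Finset.Icc (k + 1) i, α j i) / (∏ j ∈ Finset.Icc k (i - 1), β j i))) := by
    intro i hi
    rw [Finset.mem_Icc] at hi
    obtain ⟨hki, hin⟩ := hi
    set L : ℂ := ∏ j ∈ Finset.Icc k (i - 1), β j i with hLdef
    set R : ℂ := ∏ j ∈ Finset.Icc (i + 1) n, β j i with hRdef
    set P : ℂ := ∏ j ∈ Finset.Icc (k + 1) (n - 1), α j i with hPdef
    have hL : L ≠ 0 := by
      rw [hLdef, Finset.prod_ne_zero_iff]
      intro j hj; rw [Finset.mem_Icc] at hj; exact hβ j i (by omega)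
    have hR : R ≠ 0 := by
      rw [hRdef, Finset.prod_ne_zero_iff]
      intro j hj; rw [Finset.mem_Icc] at hj; exact hβ j i (by omega)
    have hneg : (∏ j ∈ Finset.Icc (i + 1) n, β i j)
        = (-1 : ℂ) ^ ((n - i).toNat) * R := by
      rw [hRdef]
      calc (∏ j ∈ Finset.Icc (i + 1) n, β i j)
          = ∏ j ∈ Finset.Icc (i + 1) n, ((-1) * β j i) := by
            refine Finset.prod_congr rfl fun j _ => ?_
            rw [hanti i j]; ring
        _ = (-1 : ℂ) ^ ((Finset.Icc (i + 1) n).card) * ∏ j ∈ Finset.Icc (i + 1) n, β j i := by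
            rw [Finset.prod_mul_distrib, Finset.prod_const]
        _ = _ := by
            congr 2
            rw [Int.card_Icc]
            congr 1
            omega
    have hQsplit : Q = (∏ p ∈ (Finset.Icc k n ×ˢ Finset.Icc k n).filter
        (fun p => p.1 < p.2 ∧ p.1 ≠ i ∧ p.2 ≠ i), β p.1 p.2)
        * (L * ((-1 : ℂ) ^ ((n - i).toNat) * R)) := by
      rw [hQ, pairs_split β k n i hki hin, hneg, hLdef]
    have hzpow : (-1 : ℂ) ^ (n - i) = (-1 : ℂ) ^ ((n - i).toNat) := by
      rw [← zpow_natCast, Int.toNat_of_nonneg (by omega : (0:ℤ) ≤ n - i)]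
    have hf : fAux α β k n i = Q * P / (L * R) := by
      rw [eq_div_iff (mul_ne_zero hL hR)]
      unfold fAux
      rw [hzpow, ← hPdef]
      linear_combination (-P) * hQsplit
    have hαi := hα i
    have hαk := hα k
    have halpha := alpha_split α k n i hki hin hkn
    rw [hf]
    field_simp
    linear_combination (-Q) * halpha
  rw [Finset.sum_congr rfl key, ← Finset.mul_sum, hinv k n hkn.le]
  rw [if_neg (by omega), mul_zero]
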